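/- arXiv:2004.10070 — 4 statements merged into one kernel-verified Lean document; each statement's English description precedes it below -/
import Mathlib

section
/- Let V be a 6-dimensional complex vector space and let ω₁, ω₂ ∈ O₅ be linearly independent with every nonzero combination λω₁ + μω₂ in O₅. (a) If the kernel lines α_{ω₁} and α_{ω₂} coincide, then α_{λω₁+μω₂} = α_{ω₁} for all (λ,μ) ≠ (0,0). (b) If ω₁ = α₁∧(α₂∧w₁ + v∧v₁) and ω₂ = α₂∧(α₁∧w₂ + v∧v₂) with α₁, α₂, v, v₁, v₂ linearly independent and span(v,v₁,v₂) = span(v,v₁,w₁) = span(v,v₂,w₂), then the associated hyperplane satisfies A_{λω₁+μω₂} = span(α₁, α₂, v, v₁, v₂) for all (λ,μ) ≠ (0,0). -/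
open ExteriorAlgebra


private lemma exists_dual_family {V : Type*} [AddCommGroup V] [Module ℂ V]
    [FiniteDimensional ℂ V] {n : ℕ} {e : Fin n → V} (he : LinearIndependent ℂ e) :
    ∃ g : Fin n → Module.Dual ℂ V, ∀ i j, g i (e j) = if i = j then 1 else 0 := by
  classical
  have hs := (linearIndepOn_id_range_iff he.injective).mpr he
  let b := Module.Basis.extend hs
  refine ⟨fun i => b.coord ⟨e i, Module.Basis.subset_extend hs ⟨i, rfl⟩⟩, fun i j => ?_⟩
  have h1 : e j = b ⟨e j, Module.Basis.subset_extend hs ⟨j, rfl⟩⟩ :=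
    (Module.Basis.extend_apply_self hs ⟨e j, Module.Basis.subset_extend hs ⟨j, rfl⟩⟩).symm
  rw [h1, Module.Basis.coord_apply, Module.Basis.repr_self, Finsupp.single_apply]
  by_cases h : i = j
  · subst h; simp
  · rw [if_neg, if_neg h]
    intro hx
    exact h (he.injective (Subtype.ext_iff.mp hx)).symm

private lemma contract_mem_pow {V : Type*} [AddCommGroup V] [Module ℂ V]
    (f : Module.Dual ℂ V) :
    ∀ (n : ℕ) (x : ExteriorAlgebra ℂ V), x ∈ ⋀[ℂ]^(n+1) V →
      CliffordAlgebra.contractLeft f x ∈ ⋀[ℂ]^n V := by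
  intro n
  induction n with
  | zero =>
    intro x hx
    rw [show (⋀[ℂ]^(0+1) V) = LinearMap.range (ι ℂ : V →ₗ[ℂ] ExteriorAlgebra ℂ V) from
      pow_one _] at hx
    obtain ⟨v, rfl⟩ := hx
    rw [CliffordAlgebra.contractLeft_ι _ (d := f) v]
    rw [show (⋀[ℂ]^0 V) = (1 : Submodule ℂ (ExteriorAlgebra ℂ V)) from pow_zero _]
    exact ⟨f v, by simp [Algebra.algebraMap_eq_smul_one]⟩
  | succ n ih =>
    intro x hx
    rw [show (⋀[ℂ]^(n+1+1) V) =
        LinearMap.range (ι ℂ : V →ₗ[ℂ] ExteriorAlgebra ℂ V) *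
          (LinearMap.range (ι ℂ : V →ₗ[ℂ] ExteriorAlgebra ℂ V)) ^ (n+1) from pow_succ' _ _] at hx
    refine Submodule.mul_induction_on hx ?_ ?_
    · rintro m ⟨w, rfl⟩ y hy
      rw [CliffordAlgebra.contractLeft_ι_mul (d := f) w y]
      refine sub_mem (Submodule.smul_mem _ _ hy) ?_
      have h2 : ι ℂ w * CliffordAlgebra.contractLeft f y ∈
          (LinearMap.range (ι ℂ : V →ₗ[ℂ] ExteriorAlgebra ℂ V)) *
            (LinearMap.range (ι ℂ : V →ₗ[ℂ] ExteriorAlgebra ℂ V)) ^ n :=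
        Submodule.mul_mem_mul ⟨w, rfl⟩ (ih y hy)
      rwa [← pow_succ'] at h2
    · intro x y hx hy
      rw [map_add]
      exact add_mem hx hy

private lemma decomposable_of_two {V : Type*} [AddCommGroup V] [Module ℂ V]
    [FiniteDimensional ℂ V] (a b : V) (ω : ExteriorAlgebra ℂ V) (hω : ω ∈ ⋀[ℂ]^3 V)
    (hab : LinearIndependent ℂ ![a, b])
    (ha : ι ℂ a * ω = 0) (hb : ι ℂ b * ω = 0) :
    ∃ c, ω = ι ℂ a * ι ℂ b * ι ℂ c := by
  obtain ⟨g, hg⟩ := exists_dual_family hab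
  have hFa : g 0 a = 1 := by simpa using hg 0 0
  have hFb : g 0 b = 0 := by simpa using hg 0 1
  have hGa : g 1 a = 0 := by simpa using hg 1 0
  have hGb : g 1 b = 1 := by simpa using hg 1 1
  set η := CliffordAlgebra.contractLeft (g 0) ω with hη
  have h1 : ω = ι ℂ a * η := by
    have h := congrArg (CliffordAlgebra.contractLeft (g 0)) ha
    rw [map_zero, CliffordAlgebra.contractLeft_ι_mul (d := g 0) a ω, hFa, one_smul] at h
    exact (sub_eq_zero.mp h)
  have h2 : ι ℂ b * (ι ℂ a * η) = 0 := by rw [← h1]; exact hb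
  have h3 := congrArg (CliffordAlgebra.contractLeft (g 1)) h2
  rw [map_zero, CliffordAlgebra.contractLeft_ι_mul (d := g 1) b _, hGb, one_smul,
      CliffordAlgebra.contractLeft_ι_mul (d := g 1) a η, hGa, zero_smul, zero_sub,
      mul_neg, sub_neg_eq_add] at h3
  -- h3 : ι a * η + ι b * (ι a * contractLeft (g 1) η) = 0
  obtain ⟨c, hc⟩ : ∃ c, CliffordAlgebra.contractLeft (g 1) η = ι ℂ c := by
    have hmem : CliffordAlgebra.contractLeft (g 1) η ∈ ⋀[ℂ]^1 V :=
      contract_mem_pow (g 1) 1 η (contract_mem_pow (g 0) 2 ω hω)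
    rw [show (⋀[ℂ]^1 V) = LinearMap.range (ι ℂ : V →ₗ[ℂ] ExteriorAlgebra ℂ V) from
      pow_one _] at hmem
    obtain ⟨c, hc⟩ := hmem
    exact ⟨c, hc.symm⟩
  rw [hc] at h3
  have hswap : ι ℂ b * ι ℂ a = -(ι ℂ a * ι ℂ b) :=
    eq_neg_of_add_eq_zero_left (by rw [add_comm]; exact ExteriorAlgebra.ι_add_mul_swap a b)
  refine ⟨c, ?_⟩
  rw [h1]
  have : ι ℂ b * (ι ℂ a * ι ℂ c) = -(ι ℂ a * ι ℂ b * ι ℂ c) := by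
    rw [← mul_assoc, hswap, neg_mul]
  rw [this] at h3
  have := add_eq_zero_iff_eq_neg.mp h3
  rw [this, neg_neg]

set_option maxHeartbeats 1000000 in
private lemma stmt13_partB {V : Type*} [AddCommGroup V] [Module ℂ V] [FiniteDimensional ℂ V]
    (hV : Module.finrank ℂ V = 6)
    (K : Module.Dual ℂ V →ₗ[ℂ] ExteriorAlgebra ℂ V →ₗ[ℂ] ExteriorAlgebra ℂ V)
    (hK : ∀ (f : Module.Dual ℂ V) (u v w : V),
      K f (ι ℂ u * ι ℂ v * ι ℂ w) =
        f u • (ι ℂ v * ι ℂ w) - f v • (ι ℂ u * ι ℂ w) + f w • (ι ℂ u * ι ℂ v))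
    (α₁ α₂ v w₁ w₂ v₁ v₂ : V)
    (hli : LinearIndependent ℂ ![α₁, α₂, v, v₁, v₂])
    (hsp1 : Submodule.span ℂ {v, v₁, v₂} = Submodule.span ℂ {v, v₁, w₁})
    (hsp2 : Submodule.span ℂ {v, v₁, v₂} = Submodule.span ℂ {v, v₂, w₂})
    (lam mu : ℂ) (hlm : ¬ (lam = 0 ∧ mu = 0)) (f : Module.Dual ℂ V) (hf : f ≠ 0)
    (hKf : K f (lam • (ι ℂ α₁ * (ι ℂ α₂ * ι ℂ w₁ + ι ℂ v * ι ℂ v₁))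
      + mu • (ι ℂ α₂ * (ι ℂ α₁ * ι ℂ w₂ + ι ℂ v * ι ℂ v₂))) = 0) :
    LinearMap.ker f = Submodule.span ℂ {α₁, α₂, v, v₁, v₂} := by
  classical
  -- coefficients of w₁ and w₂
  have hmem1 : w₁ ∈ Submodule.span ℂ ({v, v₁, v₂} : Set V) := by
    rw [hsp1]; exact Submodule.subset_span (by simp)
  obtain ⟨a, z, hz, hw1⟩ := Submodule.mem_span_insert.mp hmem1
  obtain ⟨bb, cc, hz'⟩ := Submodule.mem_span_pair.mp hz
  rw [← hz'] at hw1
  have hmem2 : w₂ ∈ Submodule.span ℂ ({v, v₂, v₁} : Set V) := by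
    rw [show ({v, v₂, v₁} : Set V) = {v, v₁, v₂} by ext x; simp; tauto, hsp2]
    exact Submodule.subset_span (by simp)
  obtain ⟨p, z₂, hz₂, hw2⟩ := Submodule.mem_span_insert.mp hmem2
  obtain ⟨r, q, hz₂'⟩ := Submodule.mem_span_pair.mp hz₂
  rw [← hz₂'] at hw2
  have hv2 : v₂ ∉ Submodule.span ℂ ({v, v₁} : Set V) := by
    have h4 := hli.notMem_span_image (s := ({2, 3} : Set (Fin 5)))
      (by decide : (4:Fin 5) ∉ ({2,3} : Set (Fin 5)))
    have himg : (![α₁, α₂, v, v₁, v₂]) '' ({2, 3} : Set (Fin 5)) = {v, v₁} := by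
      rw [Set.image_pair]; simp
    intro hmem
    apply h4
    rw [himg]
    simpa using hmem
  have hv1 : v₁ ∉ Submodule.span ℂ ({v, v₂} : Set V) := by
    have h4 := hli.notMem_span_image (s := ({2, 4} : Set (Fin 5)))
      (by decide : (3:Fin 5) ∉ ({2,4} : Set (Fin 5)))
    have himg : (![α₁, α₂, v, v₁, v₂]) '' ({2, 4} : Set (Fin 5)) = {v, v₂} := by
      rw [Set.image_pair]; simp
    intro hmem
    apply h4
    rw [himg]
    simpa using hmem
  have hcc : cc ≠ 0 := by
    intro h0
    apply hv2
    have hv2mem : v₂ ∈ Submodule.span ℂ ({v, v₁, w₁} : Set V) := by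
      rw [← hsp1]; exact Submodule.subset_span (by simp)
    refine Submodule.span_le.mpr ?_ hv2mem
    rintro x hx
    simp only [Set.mem_insert_iff, Set.mem_singleton_iff] at hx
    rcases hx with rfl | rfl | rfl
    · exact Submodule.subset_span (by simp)
    · exact Submodule.subset_span (by simp)
    · rw [hw1, h0, zero_smul, add_zero]
      exact Submodule.add_mem _
        (Submodule.smul_mem _ _ (Submodule.subset_span (by simp)))
        (Submodule.smul_mem _ _ (Submodule.subset_span (by simp)))
  have hq : q ≠ 0 := by
    intro h0
    apply hv1
    have hv1mem : v₁ ∈ Submodule.span ℂ ({v, v₂, w₂} : Set V) := by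
      rw [← hsp2]; exact Submodule.subset_span (by simp)
    refine Submodule.span_le.mpr ?_ hv1mem
    rintro x hx
    simp only [Set.mem_insert_iff, Set.mem_singleton_iff] at hx
    rcases hx with rfl | rfl | rfl
    · exact Submodule.subset_span (by simp)
    · exact Submodule.subset_span (by simp)
    · rw [hw2, h0, zero_smul, add_zero]
      exact Submodule.add_mem _
        (Submodule.smul_mem _ _ (Submodule.subset_span (by simp)))
        (Submodule.smul_mem _ _ (Submodule.subset_span (by simp)))
  obtain ⟨g, hg⟩ := exists_dual_family hli
  simp only [map_add, map_smul, mul_add, ← mul_assoc, hK] at hKf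
  have hg00 : g 0 α₁ = 1 := by simpa using hg 0 0
  have hg01 : g 0 α₂ = 0 := by simpa using hg 0 1
  have hg02 : g 0 v = 0 := by simpa using hg 0 2
  have hg03 : g 0 v₁ = 0 := by simpa using hg 0 3
  have hg04 : g 0 v₂ = 0 := by simpa using hg 0 4
  have hg10 : g 1 α₁ = 0 := by simpa using hg 1 0
  have hg11 : g 1 α₂ = 1 := by simpa using hg 1 1
  have hg12 : g 1 v = 0 := by simpa using hg 1 2
  have hg13 : g 1 v₁ = 0 := by simpa using hg 1 3
  have hg14 : g 1 v₂ = 0 := by simpa using hg 1 4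
  have hg20 : g 2 α₁ = 0 := by simpa using hg 2 0
  have hg21 : g 2 α₂ = 0 := by simpa using hg 2 1
  have hg22 : g 2 v = 1 := by simpa using hg 2 2
  have hg23 : g 2 v₁ = 0 := by simpa using hg 2 3
  have hg24 : g 2 v₂ = 0 := by simpa using hg 2 4
  have hg30 : g 3 α₁ = 0 := by simpa using hg 3 0
  have hg31 : g 3 α₂ = 0 := by simpa using hg 3 1
  have hg32 : g 3 v = 0 := by simpa using hg 3 2
  have hg33 : g 3 v₁ = 1 := by simpa using hg 3 3
  have hg34 : g 3 v₂ = 0 := by simpa using hg 3 4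
  have hg40 : g 4 α₁ = 0 := by simpa using hg 4 0
  have hg41 : g 4 α₂ = 0 := by simpa using hg 4 1
  have hg42 : g 4 v = 0 := by simpa using hg 4 2
  have hg43 : g 4 v₁ = 0 := by simpa using hg 4 3
  have hg44 : g 4 v₂ = 1 := by simpa using hg 4 4
  have hgw10 : g 0 w₁ = 0 := by
    rw [hw1]; simp [hg02, hg03, hg04, hg00, hg01]
  have hgw20 : g 0 w₂ = 0 := by
    rw [hw2]; simp [hg02, hg03, hg04, hg00, hg01]
  have hgw11 : g 1 w₁ = 0 := by
    rw [hw1]; simp [hg12, hg13, hg14, hg10, hg11]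
  have hgw21 : g 1 w₂ = 0 := by
    rw [hw2]; simp [hg12, hg13, hg14, hg10, hg11]
  have hgw12 : g 2 w₁ = a := by
    rw [hw1]; simp [hg22, hg23, hg24, hg20, hg21]
  have hgw22 : g 2 w₂ = p := by
    rw [hw2]; simp [hg22, hg23, hg24, hg20, hg21]
  have hgw13 : g 3 w₁ = bb := by
    rw [hw1]; simp [hg32, hg33, hg34, hg30, hg31]
  have hgw23 : g 3 w₂ = q := by
    rw [hw2]; simp [hg32, hg33, hg34, hg30, hg31]
  have hgw14 : g 4 w₁ = cc := by
    rw [hw1]; simp [hg42, hg43, hg44, hg40, hg41]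
  have hgw24 : g 4 w₂ = r := by
    rw [hw2]; simp [hg42, hg43, hg44, hg40, hg41]
  have hfw1 : f w₁ = a * f v + (bb * f v₁ + cc * f v₂) := by rw [hw1]; simp [smul_eq_mul]
  have hfw2 : f w₂ = p * f v + (r * f v₂ + q * f v₁) := by rw [hw2]; simp [smul_eq_mul]
  have hA1 : ∀ r : ℂ, algebraMapInv (algebraMap ℂ (ExteriorAlgebra ℂ V) r) = r :=
    ExteriorAlgebra.algebraMap_leftInverse V
  have hA2 : ∀ x : V, algebraMapInv (ι ℂ x) = (0:ℂ) := fun x => by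
    simp [ExteriorAlgebra.algebraMapInv, ExteriorAlgebra.lift_ι_apply]
  have E01 := congrArg (fun x => algebraMapInv
      (CliffordAlgebra.contractLeft (g 0) (CliffordAlgebra.contractLeft (g 1) x))) hKf
  simp only [map_add, map_smul, map_sub, map_zero, CliffordAlgebra.contractLeft_ι_mul,
    CliffordAlgebra.contractLeft_ι, CliffordAlgebra.contractLeft_algebraMap,
    CliffordAlgebra.contractLeft_mul_algebraMap, map_mul, smul_eq_mul,
    hg00, hg01, hg02, hg03, hg04, hg10, hg11, hg12, hg13, hg14, hg20, hg21, hg22, hg23, hg24, hg30, hg31, hg32, hg33, hg34, hg40, hg41, hg42, hg43, hg44, hgw10, hgw11, hgw12, hgw13, hgw14, hgw20, hgw21, hgw22, hgw23, hgw24, hfw1, hfw2, hA1, hA2, mul_zero, zero_mul, mul_one, one_mul,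
    sub_zero, zero_sub, add_zero, zero_add, neg_zero, mul_neg, neg_neg] at E01
  have E02 := congrArg (fun x => algebraMapInv
      (CliffordAlgebra.contractLeft (g 0) (CliffordAlgebra.contractLeft (g 2) x))) hKf
  simp only [map_add, map_smul, map_sub, map_zero, CliffordAlgebra.contractLeft_ι_mul,
    CliffordAlgebra.contractLeft_ι, CliffordAlgebra.contractLeft_algebraMap,
    CliffordAlgebra.contractLeft_mul_algebraMap, map_mul, smul_eq_mul,
    hg00, hg01, hg02, hg03, hg04, hg10, hg11, hg12, hg13, hg14, hg20, hg21, hg22, hg23, hg24, hg30, hg31, hg32, hg33, hg34, hg40, hg41, hg42, hg43, hg44, hgw10, hgw11, hgw12, hgw13, hgw14, hgw20, hgw21, hgw22, hgw23, hgw24, hfw1, hfw2, hA1, hA2, mul_zero, zero_mul, mul_one, one_mul,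
    sub_zero, zero_sub, add_zero, zero_add, neg_zero, mul_neg, neg_neg] at E02
  have E03 := congrArg (fun x => algebraMapInv
      (CliffordAlgebra.contractLeft (g 0) (CliffordAlgebra.contractLeft (g 3) x))) hKf
  simp only [map_add, map_smul, map_sub, map_zero, CliffordAlgebra.contractLeft_ι_mul,
    CliffordAlgebra.contractLeft_ι, CliffordAlgebra.contractLeft_algebraMap,
    CliffordAlgebra.contractLeft_mul_algebraMap, map_mul, smul_eq_mul,
    hg00, hg01, hg02, hg03, hg04, hg10, hg11, hg12, hg13, hg14, hg20, hg21, hg22, hg23, hg24, hg30, hg31, hg32, hg33, hg34, hg40, hg41, hg42, hg43, hg44, hgw10, hgw11, hgw12, hgw13, hgw14, hgw20, hgw21, hgw22, hgw23, hgw24, hfw1, hfw2, hA1, hA2, mul_zero, zero_mul, mul_one, one_mul,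
    sub_zero, zero_sub, add_zero, zero_add, neg_zero, mul_neg, neg_neg] at E03
  have E04 := congrArg (fun x => algebraMapInv
      (CliffordAlgebra.contractLeft (g 0) (CliffordAlgebra.contractLeft (g 4) x))) hKf
  simp only [map_add, map_smul, map_sub, map_zero, CliffordAlgebra.contractLeft_ι_mul,
    CliffordAlgebra.contractLeft_ι, CliffordAlgebra.contractLeft_algebraMap,
    CliffordAlgebra.contractLeft_mul_algebraMap, map_mul, smul_eq_mul,
    hg00, hg01, hg02, hg03, hg04, hg10, hg11, hg12, hg13, hg14, hg20, hg21, hg22, hg23, hg24, hg30, hg31, hg32, hg33, hg34, hg40, hg41, hg42, hg43, hg44, hgw10, hgw11, hgw12, hgw13, hgw14, hgw20, hgw21, hgw22, hgw23, hgw24, hfw1, hfw2, hA1, hA2, mul_zero, zero_mul, mul_one, one_mul,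
    sub_zero, zero_sub, add_zero, zero_add, neg_zero, mul_neg, neg_neg] at E04
  have E12 := congrArg (fun x => algebraMapInv
      (CliffordAlgebra.contractLeft (g 1) (CliffordAlgebra.contractLeft (g 2) x))) hKf
  simp only [map_add, map_smul, map_sub, map_zero, CliffordAlgebra.contractLeft_ι_mul,
    CliffordAlgebra.contractLeft_ι, CliffordAlgebra.contractLeft_algebraMap,
    CliffordAlgebra.contractLeft_mul_algebraMap, map_mul, smul_eq_mul,
    hg00, hg01, hg02, hg03, hg04, hg10, hg11, hg12, hg13, hg14, hg20, hg21, hg22, hg23, hg24, hg30, hg31, hg32, hg33, hg34, hg40, hg41, hg42, hg43, hg44, hgw10, hgw11, hgw12, hgw13, hgw14, hgw20, hgw21, hgw22, hgw23, hgw24, hfw1, hfw2, hA1, hA2, mul_zero, zero_mul, mul_one, one_mul,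
    sub_zero, zero_sub, add_zero, zero_add, neg_zero, mul_neg, neg_neg] at E12
  have E13 := congrArg (fun x => algebraMapInv
      (CliffordAlgebra.contractLeft (g 1) (CliffordAlgebra.contractLeft (g 3) x))) hKf
  simp only [map_add, map_smul, map_sub, map_zero, CliffordAlgebra.contractLeft_ι_mul,
    CliffordAlgebra.contractLeft_ι, CliffordAlgebra.contractLeft_algebraMap,
    CliffordAlgebra.contractLeft_mul_algebraMap, map_mul, smul_eq_mul,
    hg00, hg01, hg02, hg03, hg04, hg10, hg11, hg12, hg13, hg14, hg20, hg21, hg22, hg23, hg24, hg30, hg31, hg32, hg33, hg34, hg40, hg41, hg42, hg43, hg44, hgw10, hgw11, hgw12, hgw13, hgw14, hgw20, hgw21, hgw22, hgw23, hgw24, hfw1, hfw2, hA1, hA2, mul_zero, zero_mul, mul_one, one_mul,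
    sub_zero, zero_sub, add_zero, zero_add, neg_zero, mul_neg, neg_neg] at E13
  have E14 := congrArg (fun x => algebraMapInv
      (CliffordAlgebra.contractLeft (g 1) (CliffordAlgebra.contractLeft (g 4) x))) hKf
  simp only [map_add, map_smul, map_sub, map_zero, CliffordAlgebra.contractLeft_ι_mul,
    CliffordAlgebra.contractLeft_ι, CliffordAlgebra.contractLeft_algebraMap,
    CliffordAlgebra.contractLeft_mul_algebraMap, map_mul, smul_eq_mul,
    hg00, hg01, hg02, hg03, hg04, hg10, hg11, hg12, hg13, hg14, hg20, hg21, hg22, hg23, hg24, hg30, hg31, hg32, hg33, hg34, hg40, hg41, hg42, hg43, hg44, hgw10, hgw11, hgw12, hgw13, hgw14, hgw20, hgw21, hgw22, hgw23, hgw24, hfw1, hfw2, hA1, hA2, mul_zero, zero_mul, mul_one, one_mul,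
    sub_zero, zero_sub, add_zero, zero_add, neg_zero, mul_neg, neg_neg] at E14
  have E23 := congrArg (fun x => algebraMapInv
      (CliffordAlgebra.contractLeft (g 2) (CliffordAlgebra.contractLeft (g 3) x))) hKf
  simp only [map_add, map_smul, map_sub, map_zero, CliffordAlgebra.contractLeft_ι_mul,
    CliffordAlgebra.contractLeft_ι, CliffordAlgebra.contractLeft_algebraMap,
    CliffordAlgebra.contractLeft_mul_algebraMap, map_mul, smul_eq_mul,
    hg00, hg01, hg02, hg03, hg04, hg10, hg11, hg12, hg13, hg14, hg20, hg21, hg22, hg23, hg24, hg30, hg31, hg32, hg33, hg34, hg40, hg41, hg42, hg43, hg44, hgw10, hgw11, hgw12, hgw13, hgw14, hgw20, hgw21, hgw22, hgw23, hgw24, hfw1, hfw2, hA1, hA2, mul_zero, zero_mul, mul_one, one_mul,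
    sub_zero, zero_sub, add_zero, zero_add, neg_zero, mul_neg, neg_neg] at E23
  have E24 := congrArg (fun x => algebraMapInv
      (CliffordAlgebra.contractLeft (g 2) (CliffordAlgebra.contractLeft (g 4) x))) hKf
  simp only [map_add, map_smul, map_sub, map_zero, CliffordAlgebra.contractLeft_ι_mul,
    CliffordAlgebra.contractLeft_ι, CliffordAlgebra.contractLeft_algebraMap,
    CliffordAlgebra.contractLeft_mul_algebraMap, map_mul, smul_eq_mul,
    hg00, hg01, hg02, hg03, hg04, hg10, hg11, hg12, hg13, hg14, hg20, hg21, hg22, hg23, hg24, hg30, hg31, hg32, hg33, hg34, hg40, hg41, hg42, hg43, hg44, hgw10, hgw11, hgw12, hgw13, hgw14, hgw20, hgw21, hgw22, hgw23, hgw24, hfw1, hfw2, hA1, hA2, mul_zero, zero_mul, mul_one, one_mul,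
    sub_zero, zero_sub, add_zero, zero_add, neg_zero, mul_neg, neg_neg] at E24
  have hx1 : f α₁ = 0 ∧ f α₂ = 0 ∧ f v = 0 ∧ f v₁ = 0 ∧ f v₂ = 0 := by
    by_cases hl : lam = 0
    · have hm : mu ≠ 0 := fun h => hlm ⟨hl, h⟩
      have hx2 : f α₂ = 0 := mul_left_cancel₀ hm (show mu * f α₂ = mu * 0 by
        linear_combination -E24)
      have hx1 : f α₁ = 0 := mul_left_cancel₀ (mul_ne_zero hm hq)
        (show mu * q * f α₁ = mu * q * 0 by linear_combination E13 + (f α₁ * bb) * hl)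
      have hx5 : f v₂ = 0 := mul_left_cancel₀ hm (show mu * f v₂ = mu * 0 by
        linear_combination -E12 - (f α₁ * a) * hl + mu * p * hx1)
      have hx3 : f v = 0 := mul_left_cancel₀ hm (show mu * f v = mu * 0 by
        linear_combination E14 + (f α₁ * cc) * hl - mu * r * hx1)
      have hx4 : f v₁ = 0 := mul_left_cancel₀ (mul_ne_zero hm hq)
        (show mu * q * f v₁ = mu * q * 0 by
          linear_combination E01 + (a * f v + (bb * f v₁ + cc * f v₂)) * hl
            - mu * p * hx3 - mu * r * hx5)
      exact ⟨hx1, hx2, hx3, hx4, hx5⟩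
    · have hx1 : f α₁ = 0 := mul_left_cancel₀ hl (show lam * f α₁ = lam * 0 by
        linear_combination -E23)
      by_cases hm : mu = 0
      · have hx2 : f α₂ = 0 := mul_left_cancel₀ (mul_ne_zero hl hcc)
          (show lam * cc * f α₂ = lam * cc * 0 by linear_combination E04 + (f α₂ * r) * hm)
        have hx3 : f v = 0 := mul_left_cancel₀ hl (show lam * f v = lam * 0 by
          linear_combination E03 + (f α₂ * q) * hm - lam * bb * hx2)
        have hx4 : f v₁ = 0 := mul_left_cancel₀ hl (show lam * f v₁ = lam * 0 by
          linear_combination -E02 - (f α₂ * p) * hm + lam * a * hx2)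
        have hx5 : f v₂ = 0 := mul_left_cancel₀ (mul_ne_zero hl hcc)
          (show lam * cc * f v₂ = lam * cc * 0 by
            linear_combination -E01 + (p * f v + (r * f v₂ + q * f v₁)) * hm
              - lam * a * hx3 - lam * bb * hx4)
        exact ⟨hx1, hx2, hx3, hx4, hx5⟩
      · have hx2 : f α₂ = 0 := mul_left_cancel₀ hm (show mu * f α₂ = mu * 0 by
          linear_combination -E24)
        have hx3 : f v = 0 := mul_left_cancel₀ hl (show lam * f v = lam * 0 by
          linear_combination E03 - lam * bb * hx2 + mu * q * hx2)
        have hx4 : f v₁ = 0 := mul_left_cancel₀ hl (show lam * f v₁ = lam * 0 by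
          linear_combination -E02 + lam * a * hx2 - mu * p * hx2)
        have hx5 : f v₂ = 0 := mul_left_cancel₀ hm (show mu * f v₂ = mu * 0 by
          linear_combination -E12 - lam * a * hx1 + mu * p * hx1)
        exact ⟨hx1, hx2, hx3, hx4, hx5⟩
  obtain ⟨hx1, hx2, hx3, hx4, hx5⟩ := hx1
  -- the span is contained in the kernel
  have hker : Submodule.span ℂ ({α₁, α₂, v, v₁, v₂} : Set V) ≤ LinearMap.ker f := by
    rw [Submodule.span_le]
    rintro x hx
    simp only [Set.mem_insert_iff, Set.mem_singleton_iff] at hx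
    rcases hx with rfl | rfl | rfl | rfl | rfl <;>
      simp [LinearMap.mem_ker, hx1, hx2, hx3, hx4, hx5]
  -- dimensions
  have hset : Set.range ![α₁, α₂, v, v₁, v₂] = ({α₁, α₂, v, v₁, v₂} : Set V) := by
    ext x
    constructor
    · rintro ⟨i, rfl⟩
      fin_cases i <;> simp
    · intro hx
      simp only [Set.mem_insert_iff, Set.mem_singleton_iff] at hx
      rcases hx with rfl | rfl | rfl | rfl | rfl
      exacts [⟨0, rfl⟩, ⟨1, rfl⟩, ⟨2, rfl⟩, ⟨3, rfl⟩, ⟨4, rfl⟩]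
  have hrank1 : Module.finrank ℂ (Submodule.span ℂ ({α₁, α₂, v, v₁, v₂} : Set V)) = 5 := by
    rw [← hset, finrank_span_eq_card hli]
    simp
  have hrank2 : Module.finrank ℂ (LinearMap.ker f) = 5 := by
    have h := LinearMap.finrank_range_add_finrank_ker f
    rw [hV] at h
    have h1 : Module.finrank ℂ (LinearMap.range f) ≤ 1 := by
      simpa using (LinearMap.range f).finrank_le
    have h2 : Module.finrank ℂ (LinearMap.range f) ≠ 0 := by
      simp only [ne_eq, Submodule.finrank_eq_zero]
      intro h0
      exact hf (LinearMap.range_eq_bot.mp h0)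
    omega
  exact (Submodule.eq_of_le_of_finrank_eq hker (hrank1.trans hrank2.symm)).symm

/-- Membership in the Segre orbit `O₅`. -/
def InO5 {V : Type*} [AddCommGroup V] [Module ℂ V] (ω : ExteriorAlgebra ℂ V) : Prop :=
  ω ∈ ⋀[ℂ]^3 V ∧ (¬ ∃ a b c : V, ω = ι ℂ a * ι ℂ b * ι ℂ c) ∧
    ∃ v : V, v ≠ 0 ∧ ι ℂ v * ω = 0

/-- for linearly independent `ω₁, ω₂ ∈ O₅` whose pencil lies in `O₅`:
(a) if the kernel lines `α_{ω₁}` and `α_{ω₂}` coincide, then every `λω₁ + μω₂` has the same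
kernel line; (b) if `ω₁ = α₁∧(α₂∧w₁ + v∧v₁)` and `ω₂ = α₂∧(α₁∧w₂ + v∧v₂)` in the normal
form of type (3), then the associated hyperplane of every `λω₁ + μω₂` is
`span(α₁,α₂,v,v₁,v₂)`. -/
theorem stmt13 {V : Type*} [AddCommGroup V] [Module ℂ V] [FiniteDimensional ℂ V]
    (hV : Module.finrank ℂ V = 6)
    (K : Module.Dual ℂ V →ₗ[ℂ] ExteriorAlgebra ℂ V →ₗ[ℂ] ExteriorAlgebra ℂ V)
    (hK : ∀ (f : Module.Dual ℂ V) (u v w : V),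
      K f (ι ℂ u * ι ℂ v * ι ℂ w) =
        f u • (ι ℂ v * ι ℂ w) - f v • (ι ℂ u * ι ℂ w) + f w • (ι ℂ u * ι ℂ v))
    (ω₁ ω₂ : ExteriorAlgebra ℂ V) (hO1 : InO5 ω₁) (hO2 : InO5 ω₂)
    (hind : LinearIndependent ℂ ![ω₁, ω₂])
    (hpencil : ∀ lam mu : ℂ, ¬ (lam = 0 ∧ mu = 0) → InO5 (lam • ω₁ + mu • ω₂)) :
    -- (a)
    ((∀ α₁ α₂ : V, α₁ ≠ 0 → α₂ ≠ 0 →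
      (∀ v : V, ι ℂ v * ω₁ = 0 ↔ v ∈ Submodule.span ℂ {α₁}) →
      (∀ v : V, ι ℂ v * ω₂ = 0 ↔ v ∈ Submodule.span ℂ {α₂}) →
      Submodule.span ℂ {α₁} = Submodule.span ℂ {α₂} →
      ∀ lam mu : ℂ, ¬ (lam = 0 ∧ mu = 0) →
        ∀ v : V, ι ℂ v * (lam • ω₁ + mu • ω₂) = 0 ↔ v ∈ Submodule.span ℂ {α₁}) ∧
    -- (b)
    (∀ α₁ α₂ v w₁ w₂ v₁ v₂ : V,
      LinearIndependent ℂ ![α₁, α₂, v, v₁, v₂] →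
      Submodule.span ℂ {v, v₁, v₂} = Submodule.span ℂ {v, v₁, w₁} →
      Submodule.span ℂ {v, v₁, v₂} = Submodule.span ℂ {v, v₂, w₂} →
      ω₁ = ι ℂ α₁ * (ι ℂ α₂ * ι ℂ w₁ + ι ℂ v * ι ℂ v₁) →
      ω₂ = ι ℂ α₂ * (ι ℂ α₁ * ι ℂ w₂ + ι ℂ v * ι ℂ v₂) →
      ∀ lam mu : ℂ, ¬ (lam = 0 ∧ mu = 0) →
        ∀ f : Module.Dual ℂ V, f ≠ 0 → K f (lam • ω₁ + mu • ω₂) = 0 →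
          LinearMap.ker f = Submodule.span ℂ {α₁, α₂, v, v₁, v₂})) := by
  constructor
  · rintro α₁ α₂ hα₁ hα₂ h1 h2 hspan lam mu hlm v'
    have hmem : ∀ x : V, x ∈ Submodule.span ℂ ({α₁} : Set V) →
        ι ℂ x * (lam • ω₁ + mu • ω₂) = 0 := by
      intro x hx
      have hx2 : x ∈ Submodule.span ℂ ({α₂} : Set V) := hspan ▸ hx
      rw [mul_add, mul_smul_comm, mul_smul_comm, (h1 x).mpr hx, (h2 x).mpr hx2,
        smul_zero, smul_zero, add_zero]
    constructor
    · intro hz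
      by_contra hv
      have hO := hpencil lam mu hlm
      have hind2 : LinearIndependent ℂ ![α₁, v'] := by
        rw [LinearIndependent.pair_iff' hα₁]
        intro t ht
        exact hv (ht ▸ Submodule.smul_mem _ t (Submodule.mem_span_singleton_self α₁))
      have hα₁ω : ι ℂ α₁ * (lam • ω₁ + mu • ω₂) = 0 :=
        hmem α₁ (Submodule.mem_span_singleton_self α₁)
      obtain ⟨c, hc⟩ := decomposable_of_two α₁ v' _ hO.1 hind2 hα₁ω hz
      exact hO.2.1 ⟨α₁, v', c, hc⟩
    · exact hmem v'
  · rintro α₁ α₂ v w₁ w₂ v₁ v₂ hli hsp1 hsp2 hw1def hw2def lam mu hlm f hf hKf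
    rw [hw1def, hw2def] at hKf
    exact stmt13_partB hV K hK α₁ α₂ v w₁ w₂ v₁ v₂ hli hsp1 hsp2 lam mu hlm f hf hKf
end

section
/- Let V be a complex vector space, k ≥ 2, and let α₁, …, α_{k+1} ∈ V be linearly independent. Suppose ρ ∈ ⋀²V satisfies: for each i ∈ {1, …, k} there exist β, γ ∈ V with ρ = αᵢ∧β + α_{k+1}∧γ (i.e., ρ ≡ 0 modulo the subspace spanned by αᵢ and α_{k+1}). Then: if k > 2, there exists β ∈ V with ρ = α_{k+1}∧β; and if k = 2, there exist c ∈ ℂ and β ∈ V with ρ = c·α₁∧α₂ + α₃∧β. -/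
open ExteriorAlgebra

section Aux

variable {V : Type*} [AddCommGroup V] [Module ℂ V]

/-- The alternating bilinear form `(x, y) ↦ f x * g y - f y * g x` as an alternating map. -/
noncomputable def biAlt (f g : V →ₗ[ℂ] ℂ) : V [⋀^Fin 2]→ₗ[ℂ] ℂ where
  toFun v := f (v 0) * g (v 1) - f (v 1) * g (v 0)
  map_update_add' := by
    intro _ m i x y
    fin_cases i <;>
      simp [Function.update_apply, Fin.ext_iff, map_add] <;> ring
  map_update_smul' := by
    intro _ m i c x
    fin_cases i <;>
      simp [Function.update_apply, Fin.ext_iff, map_smul, smul_eq_mul] <;> ring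
  map_eq_zero_of_eq' := by
    intro m i j hm hij
    fin_cases i <;> fin_cases j <;> simp_all <;> rw [hm] <;> ring

/-- A family of alternating maps, zero except in degree 2. -/
noncomputable def biFam (f g : V →ₗ[ℂ] ℂ) : ∀ i : ℕ, V [⋀^Fin i]→ₗ[ℂ] ℂ
  | 2 => biAlt f g
  | _ => 0

/-- Coefficient extraction functional on the exterior algebra. -/
noncomputable def coeff2 (f g : V →ₗ[ℂ] ℂ) : ExteriorAlgebra ℂ V →ₗ[ℂ] ℂ :=
  liftAlternating (biFam f g)

theorem coeff2_ι_mul_ι (f g : V →ₗ[ℂ] ℂ) (x y : V) :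
    coeff2 f g (ι ℂ x * ι ℂ y) = f x * g y - f y * g x := by
  rw [coeff2, liftAlternating_ι_mul, liftAlternating_ι]
  show ((biFam f g 2).curryLeft x) ![y] = _
  rw [AlternatingMap.curryLeft_apply_apply]
  show biAlt f g ![x, y] = _
  simp [biAlt]

end Aux

/-- Cartan-type lemma: let `α 0, …, α k` be `k+1` linearly independent
vectors (`k ≥ 2`) and suppose `ρ ∈ ⋀²V` satisfies `ρ ≡ 0 mod ⟨α i, α k⟩` for each
`i < k`, i.e. `ρ = α i ∧ β + α k ∧ γ` for some `β, γ`.  Then for `k > 2` one has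
`ρ = α k ∧ β` for some `β`, and for `k = 2` one has `ρ = c • α 0 ∧ α 1 + α 2 ∧ β` for some
scalar `c` and vector `β`. -/
theorem stmt16 {V : Type*} [AddCommGroup V] [Module ℂ V]
    (k : ℕ) (hk : 2 ≤ k) (α : Fin (k + 1) → V)
    (hind : LinearIndependent ℂ α)
    (ρ : ExteriorAlgebra ℂ V) (hρ : ρ ∈ ⋀[ℂ]^2 V)
    (h : ∀ i : Fin k, ∃ β γ : V,
      ρ = ι ℂ (α i.castSucc) * ι ℂ β + ι ℂ (α (Fin.last k)) * ι ℂ γ) :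
    (2 < k → ∃ β : V, ρ = ι ℂ (α (Fin.last k)) * ι ℂ β) ∧
    (k = 2 → ∃ (c : ℂ) (β : V),
      ρ = c • (ι ℂ (α 0) * ι ℂ (α 1)) + ι ℂ (α (Fin.last k)) * ι ℂ β) := by
  classical
  have hs : LinearIndepOn ℂ id (Set.range α) := hind.linearIndepOn_id
  set b := Module.Basis.extend hs with hb
  set e : Fin (k + 1) → ↥(hs.extend (Set.subset_univ _)) :=
    fun j => ⟨α j, hs.subset_extend _ ⟨j, rfl⟩⟩ with he
  have hbe : ∀ j, b (e j) = α j := fun j => Module.Basis.extend_apply_self hs (e j)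
  have he_inj : Function.Injective e := by
    intro i j hij
    exact hind.injective (congrArg Subtype.val hij)
  have hrepr : ∀ (p : ↥(hs.extend (Set.subset_univ _))) (j : Fin (k + 1)),
      b.repr (α j) p = if e j = p then 1 else 0 := by
    intro p j
    rw [← hbe j, b.repr_self_apply]
  have key : ∀ (u βx w γx : V) (p q : ↥(hs.extend (Set.subset_univ _))),
      ρ = ι ℂ u * ι ℂ βx + ι ℂ w * ι ℂ γx →
      coeff2 (b.coord p) (b.coord q) ρ =
        (b.repr u p * b.repr βx q - b.repr βx p * b.repr u q)
        + (b.repr w p * b.repr γx q - b.repr γx p * b.repr w q) := by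
    intro u βx w γx p q hr
    rw [hr, map_add, coeff2_ι_mul_ι, coeff2_ι_mul_ι]
    simp [Module.Basis.coord_apply]
  set j₀ : Fin (k + 1) := ⟨0, by omega⟩ with hj₀
  set jl : Fin (k + 1) := Fin.last k with hjl
  have hj0l : j₀ ≠ jl := by simp [hj₀, hjl, Fin.ext_iff]; omega
  obtain ⟨β, γ, hβγ⟩ := h ⟨0, by omega⟩
  have hβγ' : ρ = ι ℂ (α j₀) * ι ℂ β + ι ℂ (α jl) * ι ℂ γ := hβγ
  have vanish : ∀ i : Fin k, i.1 ≠ 0 → ∀ q, q ≠ e j₀ → q ≠ e jl → q ≠ e i.castSucc →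
      b.repr β q = 0 := by
    intro i hi q hq0 hql hqi
    obtain ⟨β', γ', hb'⟩ := h i
    have h1 := key (α j₀) β (α jl) γ (e j₀) q hβγ'
    have h2 := key (α i.castSucc) β' (α jl) γ' (e j₀) q hb'
    rw [hrepr, hrepr, hrepr, hrepr] at h1
    rw [hrepr, hrepr, hrepr, hrepr] at h2
    rw [if_pos rfl, if_neg (fun hh => hq0 hh.symm),
        if_neg (fun hh => hj0l.symm (he_inj hh)),
        if_neg (fun hh => hql hh.symm)] at h1
    rw [if_neg (fun hh => (by simpa [Fin.ext_iff, hj₀] using (he_inj hh) : i.1 = 0) |> hi),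
        if_neg (fun hh => hqi hh.symm),
        if_neg (fun hh => hj0l.symm (he_inj hh)),
        if_neg (fun hh => hql hh.symm)] at h2
    rw [h2] at h1
    have := h1.symm
    simpa using this
  have recon : ∀ (S : Finset ↥(hs.extend (Set.subset_univ _))),
      (∀ q, q ∉ S → b.repr β q = 0) → β = ∑ q ∈ S, b.repr β q • b q := by
    intro S hS
    conv_lhs => rw [← b.linearCombination_repr β]
    rw [Finsupp.linearCombination_apply, Finsupp.sum]
    refine Finset.sum_subset ?_ ?_
    · intro q hq
      by_contra hqS
      exact (Finsupp.mem_support_iff.mp hq) (hS q hqS)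
    · intro q _ hq
      rw [Finsupp.notMem_support_iff.mp hq, zero_smul]
  have swap : ∀ x y : V, ι ℂ x * ι ℂ y = -(ι ℂ y * ι ℂ x) := fun x y =>
    eq_neg_of_add_eq_zero_left (ι_add_mul_swap x y)
  constructor
  · -- case 2 < k
    intro hk3
    have hsupp : ∀ q, q ∉ ({e j₀, e jl} : Finset _) → b.repr β q = 0 := by
      intro q hq
      simp only [Finset.mem_insert, Finset.mem_singleton, not_or] at hq
      by_cases h1 : q = e ((⟨1, by omega⟩ : Fin k).castSucc)
      · refine vanish ⟨2, by omega⟩ (by simp) q hq.1 hq.2 ?_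
        rw [h1]
        intro hcon
        have := he_inj hcon
        simp [Fin.ext_iff] at this
      · exact vanish ⟨1, by omega⟩ (by simp) q hq.1 hq.2 h1
    have hβsum := recon _ hsupp
    rw [Finset.sum_pair (fun hh => hj0l (he_inj hh)), hbe, hbe] at hβsum
    set c : ℂ := b.repr β (e j₀) with hc
    set d : ℂ := b.repr β (e jl) with hd
    refine ⟨γ - d • α j₀, ?_⟩
    rw [hβγ', hβsum]
    rw [map_add, map_smul, map_smul, mul_add, mul_smul_comm, mul_smul_comm, ι_sq_zero,
      smul_zero, zero_add, map_sub, map_smul, mul_sub, mul_smul_comm, swap (α j₀) (α jl),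
      smul_neg]
    abel
  · -- case k = 2
    intro hk2
    subst hk2
    set j1 : Fin 3 := ⟨1, by omega⟩ with hj1
    have hj01 : j₀ ≠ j1 := by simp [hj₀, hj1, Fin.ext_iff]
    have hj1l : j1 ≠ jl := by simp [hj1, hjl, Fin.ext_iff, Fin.last]
    have hsupp : ∀ q, q ∉ ({e j₀, e j1, e jl} : Finset _) → b.repr β q = 0 := by
      intro q hq
      simp only [Finset.mem_insert, Finset.mem_singleton, not_or] at hq
      exact vanish ⟨1, by omega⟩ (by simp) q hq.1 hq.2.2 hq.2.1
    have hβsum := recon _ hsupp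
    rw [Finset.sum_insert (by
        simp only [Finset.mem_insert, Finset.mem_singleton]
        push_neg
        exact ⟨fun hh => hj01 (he_inj hh), fun hh => hj0l (he_inj hh)⟩),
      Finset.sum_pair (fun hh => hj1l (he_inj hh)), hbe, hbe, hbe] at hβsum
    set c0 : ℂ := b.repr β (e j₀) with hc0
    set c1 : ℂ := b.repr β (e j1) with hc1
    set c2 : ℂ := b.repr β (e jl) with hc2
    refine ⟨c1, γ - c2 • α j₀, ?_⟩
    have h01 : (0 : Fin 3) = j₀ := rfl
    have h11 : (1 : Fin 3) = j1 := rfl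
    rw [h01, h11, hβγ', hβsum]
    rw [map_add, map_add, map_smul, map_smul, map_smul, mul_add, mul_add, mul_smul_comm,
      mul_smul_comm, mul_smul_comm, ι_sq_zero, smul_zero, zero_add, map_sub, map_smul,
      mul_sub, mul_smul_comm, swap (α j₀) (α jl), smul_neg]
    abel
end

section
/- Let V be a 6-dimensional complex vector space and let Λ ≠ Λ' be 3-dimensional subspaces of V with dim(Λ ∩ Λ') = 1, with Plücker vectors u and u' in ⋀³V. Then for any nonzero scalars a, b ∈ ℂ, the element ω = a·u + b·u' is not decomposable, the kernel of the map ∧ω : V → ⋀⁴V, v ↦ v∧ω, equals the line Λ ∩ Λ' (so ω ∈ O₅ with α_ω = Λ ∩ Λ'), and the associated hyperplane A_ω equals the 5-dimensional subspace Λ + Λ'. -/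
set_option maxHeartbeats 1000000

open ExteriorAlgebra

section Aux

variable {V : Type*} [AddCommGroup V] [Module ℂ V]

lemma aux_ι_swap (x y : V) : ι ℂ y * ι ℂ x = -(ι ℂ x * ι ℂ y) :=
  eq_neg_of_add_eq_zero_left (by rw [add_comm]; exact ι_add_mul_swap x y)

lemma aux_t12 (x y : V) : ι ℂ x * ι ℂ x * ι ℂ y = 0 := by rw [ι_sq_zero, zero_mul]
lemma aux_t23 (x y : V) : ι ℂ x * ι ℂ y * ι ℂ y = 0 := by
  rw [mul_assoc, ι_sq_zero, mul_zero]
lemma aux_t13 (x y : V) : ι ℂ x * ι ℂ y * ι ℂ x = 0 := by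
  rw [aux_ι_swap y x, neg_mul, mul_assoc, ι_sq_zero, mul_zero, neg_zero]
lemma aux_tswap12 (x y z : V) : ι ℂ y * ι ℂ x * ι ℂ z = -(ι ℂ x * ι ℂ y * ι ℂ z) := by
  rw [aux_ι_swap x y, neg_mul]
lemma aux_trot (x y z : V) : ι ℂ z * ι ℂ x * ι ℂ y = ι ℂ x * ι ℂ y * ι ℂ z := by
  rw [aux_ι_swap x z, neg_mul, mul_assoc, aux_ι_swap y z, mul_neg, neg_neg, ← mul_assoc]

/-- determinant-type alternating form from a family of functionals -/
noncomputable def dform {k : ℕ} (g : Fin k → Module.Dual ℂ V) : V [⋀^Fin k]→ₗ[ℂ] ℂ :=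
  ((Pi.basisFun ℂ (Fin k)).det).compLinearMap (LinearMap.pi g)

lemma dform_apply {k : ℕ} (g : Fin k → Module.Dual ℂ V) (w : Fin k → V) :
    dform g w = Matrix.det (Matrix.of fun i j => g i (w j)) := by
  simp only [dform, AlternatingMap.compLinearMap_apply, Module.Basis.det_apply]
  congr 1

/-- extraction functional at a fixed degree -/
noncomputable def extract (k : ℕ) (f : V [⋀^Fin k]→ₗ[ℂ] ℂ) :
    ExteriorAlgebra ℂ V →ₗ[ℂ] ℂ :=
  liftAlternating (Function.update (fun i => (0 : V [⋀^Fin i]→ₗ[ℂ] ℂ)) k f)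

lemma extract_ιMulti (k : ℕ) (f : V [⋀^Fin k]→ₗ[ℂ] ℂ) (w : Fin k → V) :
    extract k f (ιMulti ℂ k w) = f w := by
  rw [extract, liftAlternating_apply_ιMulti, Function.update_self]

lemma aux_prod2 (x y : V) : ι ℂ x * ι ℂ y = ιMulti ℂ 2 ![x, y] := by
  simp [ιMulti_succ_apply, ιMulti_zero_apply]

lemma aux_prod4 (x y z w : V) :
    ι ℂ x * (ι ℂ y * ι ℂ z * ι ℂ w) = ιMulti ℂ 4 ![x, y, z, w] := by
  simp [ιMulti_succ_apply, ιMulti_zero_apply, mul_assoc]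

lemma aux_L1 (Λ : Submodule ℂ V) (v : Fin 3 → V)
    (hsp : Submodule.span ℂ (Set.range v) = Λ) (t : V) (ht : t ∈ Λ) (ht0 : t ≠ 0) :
    ∃ p q : V, Submodule.span ℂ {t, p, q} = Λ ∧
      ∃ c : ℂ, c ≠ 0 ∧ ι ℂ t * ι ℂ p * ι ℂ q = c • (ιMulti ℂ 3 v) := by
  rw [← hsp] at ht
  obtain ⟨c, hc⟩ := (Submodule.mem_span_range_iff_exists_fun ℂ).1 ht
  rw [Fin.sum_univ_three] at hc
  have hc' : ∃ i, c i ≠ 0 := by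
    by_contra h
    push_neg at h
    apply ht0
    rw [← hc, h 0, h 1, h 2]
    simp
  have hιt : ι ℂ t = c 0 • ι ℂ (v 0) + c 1 • ι ℂ (v 1) + c 2 • ι ℂ (v 2) := by
    rw [← hc]; simp
  have hmem : ∀ i, v i ∈ Submodule.span ℂ (Set.range v) := fun i =>
    Submodule.subset_span ⟨i, rfl⟩
  have key : ∀ j k : Fin 3, ι ℂ t * ι ℂ (v j) * ι ℂ (v k) =
      c 0 • (ι ℂ (v 0) * ι ℂ (v j) * ι ℂ (v k)) + c 1 • (ι ℂ (v 1) * ι ℂ (v j) * ι ℂ (v k))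
        + c 2 • (ι ℂ (v 2) * ι ℂ (v j) * ι ℂ (v k)) := by
    intro j k
    rw [hιt]
    simp [add_mul, smul_mul_assoc]
  have hv3 : ι ℂ (v 0) * ι ℂ (v 1) * ι ℂ (v 2) = ιMulti ℂ 3 v := by
    simp [ιMulti_apply, List.ofFn_succ, mul_assoc]
    rfl
  have hspan : ∀ j k : Fin 3, v j ∈ Submodule.span ℂ {t, v j, v k} ∧
      v k ∈ Submodule.span ℂ {t, v j, v k} ∧ t ∈ Submodule.span ℂ {t, v j, v k} := by
    intro j k
    exact ⟨Submodule.subset_span (by simp), Submodule.subset_span (by simp),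
      Submodule.subset_span (by simp)⟩
  obtain ⟨i, hi⟩ := hc'
  have mkspan : ∀ j k : Fin 3, v 0 ∈ Submodule.span ℂ {t, v j, v k} →
      v 1 ∈ Submodule.span ℂ {t, v j, v k} → v 2 ∈ Submodule.span ℂ {t, v j, v k} →
      Submodule.span ℂ {t, v j, v k} = Λ := by
    intro j k h0 h1 h2
    apply le_antisymm
    · rw [Submodule.span_le]
      rintro x (rfl | rfl | rfl)
      · exact hsp ▸ ht
      · exact hsp ▸ hmem j
      · exact hsp ▸ hmem k
    · rw [← hsp, Submodule.span_le]
      rintro x ⟨j', rfl⟩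
      fin_cases j' <;> assumption
  fin_cases i
  · refine ⟨v 1, v 2, ?_, c 0, hi, ?_⟩
    · obtain ⟨h1, h2, h3⟩ := hspan 1 2
      apply mkspan 1 2 _ h1 h2
      have : v 0 = (c 0)⁻¹ • (t - c 1 • v 1 - c 2 • v 2) := by
        rw [← hc]; match_scalars <;> (try ring) <;> exact (div_self hi).symm
      rw [this]
      exact Submodule.smul_mem _ _ (sub_mem (sub_mem h3 (Submodule.smul_mem _ _ h1))
        (Submodule.smul_mem _ _ h2))
    · rw [key 1 2, aux_t12, aux_t13, hv3]
      simp
  · refine ⟨v 0, v 2, ?_, -(c 1), neg_ne_zero.2 hi, ?_⟩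
    · obtain ⟨h1, h2, h3⟩ := hspan 0 2
      apply mkspan 0 2 h1 _ h2
      have : v 1 = (c 1)⁻¹ • (t - c 0 • v 0 - c 2 • v 2) := by
        rw [← hc]; match_scalars <;> (try ring) <;> exact (div_self hi).symm
      rw [this]
      exact Submodule.smul_mem _ _ (sub_mem (sub_mem h3 (Submodule.smul_mem _ _ h1))
        (Submodule.smul_mem _ _ h2))
    · rw [key 0 2, aux_t12, aux_t13, aux_tswap12, hv3]
      simp [neg_smul]
  · refine ⟨v 0, v 1, ?_, c 2, hi, ?_⟩
    · obtain ⟨h1, h2, h3⟩ := hspan 0 1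
      apply mkspan 0 1 h1 h2
      have : v 2 = (c 2)⁻¹ • (t - c 0 • v 0 - c 1 • v 1) := by
        rw [← hc]; match_scalars <;> (try ring) <;> exact (div_self hi).symm
      rw [this]
      exact Submodule.smul_mem _ _ (sub_mem (sub_mem h3 (Submodule.smul_mem _ _ h1))
        (Submodule.smul_mem _ _ h2))
    · rw [key 0 1, aux_t12, aux_t13, aux_trot, hv3]
      simp

end Aux


/-- `u` is a Plücker vector of the `m`-dimensional subspace `Λ`. -/
def IsPluckerVector {V : Type*} [AddCommGroup V] [Module ℂ V] (m : ℕ)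
    (Λ : Submodule ℂ V) (u : ExteriorAlgebra ℂ V) : Prop :=
  ∃ v : Fin m → V, Submodule.span ℂ (Set.range v) = Λ ∧ u = ιMulti ℂ m v

/-- if `Λ ≠ Λ'` are 3-dimensional subspaces of a 6-dimensional complex `V`
with `dim(Λ ∩ Λ') = 1` and Plücker vectors `u, u'`, then for nonzero `a, b` the element
`ω = a•u + b•u'` is not decomposable, the kernel of `v ↦ v∧ω` is the line `Λ ∩ Λ'` (so
`ω ∈ O₅` with `α_ω = Λ ∩ Λ'`), and the associated hyperplane `A_ω` is the 5-dimensional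
subspace `Λ + Λ'`.  Here `K` is the contraction operation. -/
theorem stmt18 {V : Type*} [AddCommGroup V] [Module ℂ V] [FiniteDimensional ℂ V]
    (hV : Module.finrank ℂ V = 6)
    (K : Module.Dual ℂ V →ₗ[ℂ] ExteriorAlgebra ℂ V →ₗ[ℂ] ExteriorAlgebra ℂ V)
    (hK : ∀ (f : Module.Dual ℂ V) (x y z : V),
      K f (ι ℂ x * ι ℂ y * ι ℂ z) =
        f x • (ι ℂ y * ι ℂ z) - f y • (ι ℂ x * ι ℂ z) + f z • (ι ℂ x * ι ℂ y))
    (Λ Λ' : Submodule ℂ V)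
    (hΛ : Module.finrank ℂ Λ = 3) (hΛ' : Module.finrank ℂ Λ' = 3) (hne : Λ ≠ Λ')
    (hint : Module.finrank ℂ ↥(Λ ⊓ Λ') = 1)
    (u u' : ExteriorAlgebra ℂ V)
    (hu : IsPluckerVector 3 Λ u) (hu' : IsPluckerVector 3 Λ' u') :
    ∀ a b : ℂ, a ≠ 0 → b ≠ 0 →
      (¬ ∃ x y z : V, a • u + b • u' = ι ℂ x * ι ℂ y * ι ℂ z) ∧
      (∀ v : V, ι ℂ v * (a • u + b • u') = 0 ↔ v ∈ Λ ⊓ Λ') ∧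
      Module.finrank ℂ ↥(Λ ⊔ Λ') = 5 ∧
      (∃ f : Module.Dual ℂ V, f ≠ 0 ∧ K f (a • u + b • u') = 0) ∧
      (∀ f : Module.Dual ℂ V, f ≠ 0 → K f (a • u + b • u') = 0 →
        LinearMap.ker f = Λ ⊔ Λ') := by
  obtain ⟨vv, hvsp, hvu⟩ := hu
  obtain ⟨vv', hvsp', hvu'⟩ := hu'
  -- the line `Λ ⊓ Λ'`
  obtain ⟨bI⟩ : Nonempty (Module.Basis (Fin 1) ℂ ↥(Λ ⊓ Λ')) :=
    ⟨Module.finBasisOfFinrankEq ℂ _ hint⟩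
  set t : V := (bI 0 : V) with htdef
  have htI : Submodule.span ℂ {t} = Λ ⊓ Λ' := by
    have h1 : Submodule.span ℂ (Set.range (fun i : Fin 1 => (bI i : V))) = Λ ⊓ Λ' := by
      have : Set.range (fun i : Fin 1 => (bI i : V)) =
          (Λ ⊓ Λ').subtype '' (Set.range bI) := by
        rw [← Set.range_comp]; rfl
      rw [this, ← Submodule.map_span, bI.span_eq, Submodule.map_top,
        Submodule.range_subtype]
    rw [← h1]
    congr 1
    rw [show Set.range (fun i : Fin 1 => (bI i : V)) = {t} by
      ext x; simp [htdef, eq_comm, Fin.forall_fin_one, Set.range_unique]]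
  have ht0 : t ≠ 0 := fun h => bI.ne_zero 0 (Subtype.ext h)
  have htcap : t ∈ Λ ⊓ Λ' := (bI 0).2
  obtain ⟨p, q, hpq, c, hc0, hprod⟩ := aux_L1 Λ vv hvsp t htcap.1 ht0
  obtain ⟨p', q', hpq', c', hc0', hprod'⟩ := aux_L1 Λ' vv' hvsp' t htcap.2 ht0
  -- dimension of the sup
  have hsup5 : Module.finrank ℂ ↥(Λ ⊔ Λ') = 5 := by
    have h := Submodule.finrank_sup_add_finrank_inf_eq Λ Λ'
    rw [hΛ, hΛ', hint] at h
    omega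
  -- a vector outside `Λ ⊔ Λ'`
  have hsupne : Λ ⊔ Λ' ≠ ⊤ := by
    intro h
    rw [h, finrank_top, hV] at hsup5
    exact absurd hsup5 (by norm_num)
  obtain ⟨z, hz⟩ : ∃ z, z ∉ Λ ⊔ Λ' := by
    by_contra h
    push_neg at h
    exact hsupne (Submodule.eq_top_iff'.2 h)
  set e : Fin 6 → V := ![t, p, q, p', q', z] with hedef
  -- membership of generators
  have hmemp : p ∈ Λ := hpq ▸ Submodule.subset_span (by simp)
  have hmemq : q ∈ Λ := hpq ▸ Submodule.subset_span (by simp)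
  have hmemp' : p' ∈ Λ' := hpq' ▸ Submodule.subset_span (by simp)
  have hmemq' : q' ∈ Λ' := hpq' ▸ Submodule.subset_span (by simp)
  -- the span of e is everything
  have hWle : Λ ⊔ Λ' ≤ Submodule.span ℂ (Set.range e) := by
    apply sup_le
    · rw [← hpq, Submodule.span_le]
      rintro x (rfl | rfl | rfl)
      · exact Submodule.subset_span ⟨0, rfl⟩
      · exact Submodule.subset_span ⟨1, rfl⟩
      · exact Submodule.subset_span ⟨2, rfl⟩
    · rw [← hpq', Submodule.span_le]
      rintro x (rfl | rfl | rfl)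
      · exact Submodule.subset_span ⟨0, rfl⟩
      · exact Submodule.subset_span ⟨3, rfl⟩
      · exact Submodule.subset_span ⟨4, rfl⟩
  have hzW : z ∈ Submodule.span ℂ (Set.range e) :=
    Submodule.subset_span ⟨5, rfl⟩
  have hspan_top : ⊤ ≤ Submodule.span ℂ (Set.range e) := by
    have hlt : Λ ⊔ Λ' < (Λ ⊔ Λ') ⊔ Submodule.span ℂ {z} := by
      refine lt_of_le_of_ne le_sup_left (fun h => hz ?_)
      rw [h]
      exact Submodule.mem_sup_right (Submodule.mem_span_singleton_self z)
    have h6 : 5 < Module.finrank ℂ ↥((Λ ⊔ Λ') ⊔ Submodule.span ℂ {z}) := by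
      have := Submodule.finrank_lt_finrank_of_lt hlt
      omega
    have hle2 : (Λ ⊔ Λ') ⊔ Submodule.span ℂ {z} ≤ Submodule.span ℂ (Set.range e) :=
      sup_le hWle (by rw [Submodule.span_le, Set.singleton_subset_iff]; exact hzW)
    have h7 : Module.finrank ℂ ↥(Submodule.span ℂ (Set.range e)) = 6 := by
      have ha := Submodule.finrank_mono hle2
      have hb := Submodule.finrank_le (Submodule.span ℂ (Set.range e))
      omega
    exact (Submodule.eq_top_of_finrank_eq (by rw [h7, hV])).ge
  obtain ⟨b, hb⟩ : ∃ b : Module.Basis (Fin 6) ℂ V, ⇑b = e :=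
    ⟨basisOfTopLeSpanOfCardEqFinrank e hspan_top (by simp [hV]),
      coe_basisOfTopLeSpanOfCardEqFinrank e hspan_top (by simp [hV])⟩
  have hco : ∀ i j : Fin 6, b.repr (e j) i = if j = i then 1 else 0 := by
    intro i j
    rw [← hb]
    simp [Finsupp.single_apply]
  have ct : ∀ i, b.repr t i = if (0 : Fin 6) = i then 1 else 0 := fun i => hco i 0
  have cp : ∀ i, b.repr p i = if (1 : Fin 6) = i then 1 else 0 := fun i => hco i 1
  have cq : ∀ i, b.repr q i = if (2 : Fin 6) = i then 1 else 0 := fun i => hco i 2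
  have cp' : ∀ i, b.repr p' i = if (3 : Fin 6) = i then 1 else 0 := fun i => hco i 3
  have cq' : ∀ i, b.repr q' i = if (4 : Fin 6) = i then 1 else 0 := fun i => hco i 4
  have cz : ∀ i, b.repr z i = if (5 : Fin 6) = i then 1 else 0 := fun i => hco i 5
  have hb0 : b 0 = t := congrFun hb 0
  intro a β ha hβ
  -- normal form of ω
  have hω : a • u + β • u' =
      (a * c⁻¹) • (ι ℂ t * ι ℂ p * ι ℂ q) + (β * c'⁻¹) • (ι ℂ t * ι ℂ p' * ι ℂ q') := by
    rw [hvu, hvu', hprod, hprod', smul_smul, smul_smul]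
    congr 2 <;> rw [mul_assoc, inv_mul_cancel₀ ‹_›, mul_one]
  set A := a * c⁻¹ with hAdef
  set B := β * c'⁻¹ with hBdef
  have hA : A ≠ 0 := mul_ne_zero ha (inv_ne_zero hc0)
  have hB : B ≠ 0 := mul_ne_zero hβ (inv_ne_zero hc0')
  -- Part 2: kernel of wedging
  have part2 : ∀ v : V, ι ℂ v * (a • u + β • u') = 0 ↔ v ∈ Λ ⊓ Λ' := by
    intro v
    constructor
    · intro hv0
      rw [hω, mul_add, mul_smul_comm, mul_smul_comm, aux_prod4, aux_prod4] at hv0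
      have hext : ∀ S : Fin 4 → Fin 6,
          A * dform (fun i => b.coord (S i)) ![v, t, p, q]
            + B * dform (fun i => b.coord (S i)) ![v, t, p', q'] = 0 := by
        intro S
        have h := congrArg (extract 4 (dform (fun i => b.coord (S i)))) hv0
        rwa [map_add, map_smul, map_smul, extract_ιMulti, extract_ιMulti, map_zero,
          smul_eq_mul, smul_eq_mul] at h
      have h5 := hext ![5, 0, 1, 2]
      have h3 := hext ![3, 0, 1, 2]
      have h4 := hext ![4, 0, 1, 2]
      have h1 := hext ![1, 0, 3, 4]
      have h2 := hext ![2, 0, 3, 4]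
      rw [dform_apply, dform_apply] at h5 h4 h3 h2 h1
      simp only [Module.Basis.coord_apply] at h5 h4 h3 h2 h1
      simp (config := { decide := true }) [Matrix.det_succ_row_zero, Fin.sum_univ_succ,
        Fin.succAbove, ct, cp, cq, cp', cq', mul_eq_zero, hA, hB,
        show (Fin.castSucc (2 : Fin 3) : Fin 4) = 2 from rfl,
        show (Fin.castSucc (1 : Fin 3) : Fin 4) = 1 from rfl,
        show (Fin.castSucc (0 : Fin 3) : Fin 4) = 0 from rfl] at h5 h4 h3 h2 h1
      have hv : v = b.repr v 0 • t := by
        have hs := b.sum_repr v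
        rw [Fin.sum_univ_six] at hs
        rw [← hs, hb0]
        rw [show b 1 = p from congrFun hb 1, show b 2 = q from congrFun hb 2,
          show b 3 = p' from congrFun hb 3, show b 4 = q' from congrFun hb 4,
          show b 5 = z from congrFun hb 5, h1, h2, h3, h4, h5]
        simp [ct]
      rw [hv]
      exact Submodule.smul_mem _ _ htcap
    · intro hv
      rw [← htI] at hv
      obtain ⟨α, rfl⟩ := Submodule.mem_span_singleton.1 hv
      rw [map_smul, smul_mul_assoc, hω]
      have h1 : ι ℂ t * (ι ℂ t * ι ℂ p * ι ℂ q) = 0 := by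
        rw [← mul_assoc, ← mul_assoc, ι_sq_zero, zero_mul, zero_mul]
      have h2 : ι ℂ t * (ι ℂ t * ι ℂ p' * ι ℂ q') = 0 := by
        rw [← mul_assoc, ← mul_assoc, ι_sq_zero, zero_mul, zero_mul]
      rw [mul_add, mul_smul_comm, mul_smul_comm, h1, h2]
      simp
  -- nonvanishing of ω
  have hωne : a • u + β • u' ≠ 0 := by
    intro h0
    have h1 := (part2 z).1 (by rw [h0, mul_zero])
    exact hz (Submodule.mem_sup_left h1.1)
  -- Part 1: not decomposable
  have part1 : ¬ ∃ x y w : V, a • u + β • u' = ι ℂ x * ι ℂ y * ι ℂ w := by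
    rintro ⟨x, y, w, hxyz⟩
    have hx0 : ι ℂ x * (a • u + β • u') = 0 := by
      rw [hxyz, ← mul_assoc, ← mul_assoc, ι_sq_zero, zero_mul, zero_mul]
    have hy0 : ι ℂ y * (a • u + β • u') = 0 := by
      rw [hxyz, ← mul_assoc, ← mul_assoc, aux_t13, zero_mul]
    obtain ⟨α, hα⟩ := Submodule.mem_span_singleton.1 (htI ▸ (part2 x).1 hx0)
    obtain ⟨α', hα'⟩ := Submodule.mem_span_singleton.1 (htI ▸ (part2 y).1 hy0)
    apply hωne
    rw [hxyz, ← hα, ← hα']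
    simp only [map_smul, smul_mul_assoc, mul_smul_comm, aux_t12]
    simp
  -- Part 4: existence of f
  have part4 : ∃ f : Module.Dual ℂ V, f ≠ 0 ∧ K f (a • u + β • u') = 0 := by
    refine ⟨b.coord 5, ?_, ?_⟩
    · intro h
      have h1 : b.coord 5 z = 1 := by simpa using cz 5
      rw [h] at h1
      simpa using h1
    · rw [hω, map_add, map_smul, map_smul, hK, hK]
      simp [Module.Basis.coord_apply, ct, cp, cq, cp', cq']
  -- Part 5: uniqueness of the hyperplane
  have part5 : ∀ f : Module.Dual ℂ V, f ≠ 0 → K f (a • u + β • u') = 0 →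
      LinearMap.ker f = Λ ⊔ Λ' := by
    intro f hf hKf
    rw [hω, map_add, map_smul, map_smul, hK, hK] at hKf
    rw [aux_prod2 p q, aux_prod2 t q, aux_prod2 t p, aux_prod2 p' q', aux_prod2 t q',
      aux_prod2 t p'] at hKf
    have ft0 : f t = 0 := by
      have h := congrArg
        (extract 2 (dform (fun i => b.coord ((![1, 2] : Fin 2 → Fin 6) i)))) hKf
      simpa (config := { decide := true }) [-ιMulti_succ_apply, map_add, map_sub, map_smul, extract_ιMulti,
        smul_eq_mul, dform_apply, Matrix.det_fin_two, Module.Basis.coord_apply,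
        ct, cp, cq, cp', cq', mul_eq_zero, hA, hB] using h
    have fp0 : f p = 0 := by
      have h := congrArg
        (extract 2 (dform (fun i => b.coord ((![0, 2] : Fin 2 → Fin 6) i)))) hKf
      simpa (config := { decide := true }) [-ιMulti_succ_apply, map_add, map_sub, map_smul, extract_ιMulti,
        smul_eq_mul, dform_apply, Matrix.det_fin_two, Module.Basis.coord_apply,
        ct, cp, cq, cp', cq', mul_eq_zero, hA, hB] using h
    have fq0 : f q = 0 := by
      have h := congrArg
        (extract 2 (dform (fun i => b.coord ((![0, 1] : Fin 2 → Fin 6) i)))) hKf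
      simpa (config := { decide := true }) [-ιMulti_succ_apply, map_add, map_sub, map_smul, extract_ιMulti,
        smul_eq_mul, dform_apply, Matrix.det_fin_two, Module.Basis.coord_apply,
        ct, cp, cq, cp', cq', mul_eq_zero, hA, hB] using h
    have fp'0 : f p' = 0 := by
      have h := congrArg
        (extract 2 (dform (fun i => b.coord ((![0, 4] : Fin 2 → Fin 6) i)))) hKf
      simpa (config := { decide := true }) [-ιMulti_succ_apply, map_add, map_sub, map_smul, extract_ιMulti,
        smul_eq_mul, dform_apply, Matrix.det_fin_two, Module.Basis.coord_apply,
        ct, cp, cq, cp', cq', mul_eq_zero, hA, hB] using h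
    have fq'0 : f q' = 0 := by
      have h := congrArg
        (extract 2 (dform (fun i => b.coord ((![0, 3] : Fin 2 → Fin 6) i)))) hKf
      simpa (config := { decide := true }) [-ιMulti_succ_apply, map_add, map_sub, map_smul, extract_ιMulti,
        smul_eq_mul, dform_apply, Matrix.det_fin_two, Module.Basis.coord_apply,
        ct, cp, cq, cp', cq', mul_eq_zero, hA, hB] using h
    have hker : Λ ⊔ Λ' ≤ LinearMap.ker f := by
      apply sup_le
      · rw [← hpq, Submodule.span_le]
        rintro x (rfl | rfl | rfl) <;> simp [LinearMap.mem_ker, ft0, fp0, fq0]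
      · rw [← hpq', Submodule.span_le]
        rintro x (rfl | rfl | rfl) <;> simp [LinearMap.mem_ker, ft0, fp'0, fq'0]
    obtain ⟨x0, hx0⟩ : ∃ x0, f x0 ≠ 0 := by
      by_contra h
      push_neg at h
      exact hf (LinearMap.ext fun x => h x)
    have hklt : LinearMap.ker f < ⊤ :=
      lt_top_iff_ne_top.2 (fun h => hx0 (LinearMap.mem_ker.1 (h.symm ▸ Submodule.mem_top)))
    have h1 : Module.finrank ℂ ↥(LinearMap.ker f) < 6 := by
      have := Submodule.finrank_lt hklt.ne
      omega
    have h2 : 5 ≤ Module.finrank ℂ ↥(LinearMap.ker f) := by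
      have := Submodule.finrank_mono hker
      omega
    exact (Submodule.eq_of_le_of_finrank_eq hker (by omega)).symm
  exact ⟨part1, part2, hsup5, part4, part5⟩
end

section
/- Let V be a 6-dimensional complex vector space and ω ∈ ⋀³V nonzero. If the kernel of the map ∧ω : V → ⋀⁴V, v ↦ v∧ω, has dimension at least 2, then ω is decomposable; moreover, ω is decomposable if and only if this kernel has dimension exactly 3 (namely, the kernel then equals the 3-dimensional subspace whose Plücker vector is ω). In particular, for nonzero ω the kernel of ∧ω has dimension 0, 1, or 3. -/
open ExteriorAlgebra

/-- The kernel of the map `∧ω : V → ⋀⁴V`, `v ↦ v∧ω`, as a subspace of `V`. -/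
noncomputable def wedgeKer {V : Type*} [AddCommGroup V] [Module ℂ V]
    (ω : ExteriorAlgebra ℂ V) : Submodule ℂ V :=
  LinearMap.ker ((LinearMap.mulRight ℂ ω).comp (ι ℂ))

section Aux

variable {V : Type*} [AddCommGroup V] [Module ℂ V]

lemma mem_wedgeKer_iff (ω : ExteriorAlgebra ℂ V) (v : V) :
    v ∈ wedgeKer ω ↔ ι ℂ v * ω = 0 := by
  simp [wedgeKer, LinearMap.mem_ker]

lemma aux_range3 {W : Type*} (a b c : W) : Set.range ![a, b, c] = {a, b, c} := by
  ext x
  simp [Fin.exists_fin_two, Fin.exists_fin_succ, or_assoc]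
  tauto

lemma aux_wedge3 (a b c : V) : ιMulti ℂ 3 ![a, b, c] = ι ℂ a * ι ℂ b * ι ℂ c := by
  simp [ιMulti_apply, List.ofFn_succ, mul_assoc]

lemma aux_wedge4 (v a b c : V) :
    ιMulti ℂ 4 ![v, a, b, c] = ι ℂ v * (ι ℂ a * ι ℂ b * ι ℂ c) := by
  simp [ιMulti_apply, List.ofFn_succ, mul_assoc]

lemma aux_dual {n : ℕ} {v : Fin n → V} (hv : LinearIndependent ℂ v) :
    ∃ f : Fin n → Module.Dual ℂ V, ∀ i j, f i (v j) = if i = j then 1 else 0 := by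
  classical
  have hs := (linearIndepOn_id_range_iff hv.injective).mpr hv
  refine ⟨fun i => (Module.Basis.extend hs).coord
      ⟨v i, Module.Basis.subset_extend hs (Set.mem_range_self i)⟩, fun i j => ?_⟩
  have hj : v j = Module.Basis.extend hs ⟨v j, Module.Basis.subset_extend hs (Set.mem_range_self j)⟩ :=
    (Module.Basis.extend_apply_self hs ⟨v j, Module.Basis.subset_extend hs (Set.mem_range_self j)⟩).symm
  rw [hj, Module.Basis.coord_apply, Module.Basis.repr_self, Finsupp.single_apply]
  have : (⟨v j, Module.Basis.subset_extend hs (Set.mem_range_self j)⟩ :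
      hs.extend (Set.subset_univ _)) =
      ⟨v i, Module.Basis.subset_extend hs (Set.mem_range_self i)⟩ ↔ i = j := by
    simp [Subtype.ext_iff, hv.injective.eq_iff, eq_comm]
  simp only [if_congr this rfl rfl]

lemma aux_wedge_ne {n : ℕ} {v : Fin n → V} (hv : LinearIndependent ℂ v) :
    ιMulti ℂ n v ≠ 0 := by
  classical
  obtain ⟨f, hf⟩ := aux_dual hv
  set φ : V [⋀^Fin n]→ₗ[ℂ] ℂ :=
    ((Pi.basisFun ℂ (Fin n)).det).compLinearMap (LinearMap.pi fun i => f i) with hφdef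
  have key : (fun j => (LinearMap.pi fun i => f i) (v j)) = ⇑(Pi.basisFun ℂ (Fin n)) := by
    funext j
    funext i
    simp [LinearMap.pi_apply, hf, Pi.basisFun_apply, Pi.single_apply, eq_comm]
  have hφ : φ v = 1 := by
    rw [hφdef, AlternatingMap.compLinearMap_apply, key]
    exact Module.Basis.det_self _
  intro h
  have h2 := liftAlternating_apply_ιMulti (R := ℂ) (M := V) (N := ℂ)
    (Function.update (fun i => (0 : V [⋀^Fin i]→ₗ[ℂ] ℂ)) n φ) v
  rw [h, map_zero, Function.update_self, hφ] at h2
  exact one_ne_zero h2.symm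

lemma aux_contract_mem (f : Module.Dual ℂ V) (n : ℕ) (x : ExteriorAlgebra ℂ V)
    (hx : x ∈ ⋀[ℂ]^n V) :
    CliffordAlgebra.contractLeft f x ∈ ⋀[ℂ]^(n-1) V ∧
      (n = 0 → CliffordAlgebra.contractLeft f x = 0) := by
  refine Submodule.pow_induction_on_left'
    (M := LinearMap.range (ι ℂ : V →ₗ[ℂ] ExteriorAlgebra ℂ V))
    (C := fun n x _ => CliffordAlgebra.contractLeft f x ∈ ⋀[ℂ]^(n-1) V ∧
      (n = 0 → CliffordAlgebra.contractLeft f x = 0)) ?_ ?_ ?_ hx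
  · intro r
    rw [CliffordAlgebra.contractLeft_algebraMap]
    exact ⟨Submodule.zero_mem _, fun _ => rfl⟩
  · intro x y i hx hy ihx ihy
    rw [map_add]
    exact ⟨Submodule.add_mem _ ihx.1 ihy.1,
      fun h => by rw [ihx.2 h, ihy.2 h, add_zero]⟩
  · rintro m ⟨a, rfl⟩ i x hxi ih
    rw [CliffordAlgebra.contractLeft_ι_mul]
    refine ⟨?_, by omega⟩
    match i with
    | 0 =>
      rw [ih.2 rfl, mul_zero, sub_zero]
      exact Submodule.smul_mem _ _ hxi
    | (k+1) =>
      refine Submodule.sub_mem _ (Submodule.smul_mem _ _ hxi) ?_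
      have := Submodule.mul_mem_mul (LinearMap.mem_range_self (ι ℂ) a) ih.1
      rwa [← pow_succ'] at this

lemma aux_div (ω : ExteriorAlgebra ℂ V)
    (hω3 : ω ∈ ⋀[ℂ]^3 V) (v₁ v₂ : V)
    (h1 : ι ℂ v₁ * ω = 0) (h2 : ι ℂ v₂ * ω = 0)
    (hind : LinearIndependent ℂ ![v₁, v₂]) :
    ∃ a b c : V, ω = ι ℂ a * ι ℂ b * ι ℂ c := by
  obtain ⟨f, hf⟩ := aux_dual hind
  have hf11 : f 0 (![v₁, v₂] 0) = 1 := by rw [hf]; simp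
  have hf21 : f 1 (![v₁, v₂] 0) = 0 := by rw [hf]; simp
  have hf22 : f 1 (![v₁, v₂] 1) = 1 := by rw [hf]; simp
  simp only [Matrix.cons_val_zero, Matrix.cons_val_one, Matrix.head_cons] at hf11 hf21 hf22
  set η := CliffordAlgebra.contractLeft (f 0) ω with hηdef
  have hη : η ∈ ⋀[ℂ]^2 V := (aux_contract_mem (f 0) 3 ω hω3).1
  have hωη : ω = ι ℂ v₁ * η := by
    have h := congrArg (CliffordAlgebra.contractLeft (f 0)) h1
    rw [map_zero, CliffordAlgebra.contractLeft_ι_mul, hf11, one_smul, ← hηdef,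
      sub_eq_zero] at h
    exact h
  set ζ := CliffordAlgebra.contractLeft (f 1) η with hζdef
  have hζ : ζ ∈ ⋀[ℂ]^1 V := (aux_contract_mem (f 1) 2 η hη).1
  have hζ' : ζ ∈ LinearMap.range (ι ℂ : V →ₗ[ℂ] ExteriorAlgebra ℂ V) ^ 1 := hζ
  rw [pow_one] at hζ'
  obtain ⟨c, hc⟩ := hζ'
  have hfω : CliffordAlgebra.contractLeft (f 1) ω = -(ι ℂ v₁ * ζ) := by
    rw [hωη, CliffordAlgebra.contractLeft_ι_mul, hf21, zero_smul, zero_sub, hζdef]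
  have h := congrArg (CliffordAlgebra.contractLeft (f 1)) h2
  rw [map_zero, CliffordAlgebra.contractLeft_ι_mul, hf22, one_smul, hfω,
    sub_eq_zero] at h
  refine ⟨v₂, v₁, -c, ?_⟩
  rw [h, ← hc, map_neg]
  simp [mul_assoc]

lemma aux_ker_eq (ω : ExteriorAlgebra ℂ V) (a b c : V)
    (hd : ω = ι ℂ a * ι ℂ b * ι ℂ c) (hind : LinearIndependent ℂ ![a, b, c]) :
    wedgeKer ω = Submodule.span ℂ {a, b, c} := by
  apply le_antisymm
  · intro v hv
    have h0 : ι ℂ v * ω = 0 := (mem_wedgeKer_iff ω v).1 hv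
    have h4 : ιMulti ℂ 4 ![v, a, b, c] = 0 := by
      rw [aux_wedge4, ← hd, h0]
    have hni : ¬ LinearIndependent ℂ ![v, a, b, c] := fun h => aux_wedge_ne h h4
    rw [show (![v, a, b, c]) = Fin.cons v ![a, b, c] from rfl,
      linearIndependent_fin_cons] at hni
    push_neg at hni
    have := hni hind
    rwa [aux_range3] at this
  · rw [Submodule.span_le]
    intro x hx
    simp only [Set.mem_insert_iff, Set.mem_singleton_iff] at hx
    rcases hx with rfl | rfl | rfl
    · show x ∈ wedgeKer ω
      rw [mem_wedgeKer_iff, hd, ← aux_wedge4]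
      exact (ιMulti ℂ 4).map_eq_zero_of_eq ![x, x, b, c] (i := 0) (j := 1) rfl (by decide)
    · show x ∈ wedgeKer ω
      rw [mem_wedgeKer_iff, hd, ← aux_wedge4]
      exact (ιMulti ℂ 4).map_eq_zero_of_eq ![x, a, x, c] (i := 0) (j := 2) rfl (by decide)
    · show x ∈ wedgeKer ω
      rw [mem_wedgeKer_iff, hd, ← aux_wedge4]
      exact (ιMulti ℂ 4).map_eq_zero_of_eq ![x, a, b, x] (i := 0) (j := 3) rfl (by decide)

end Aux

/-- for a 6-dimensional complex `V` and nonzero `ω ∈ ⋀³V`: if the kernel of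
`∧ω` has dimension `≥ 2` then `ω` is decomposable; `ω` is decomposable iff this kernel has
dimension exactly 3, in which case the kernel is the 3-dimensional subspace whose Plücker
vector is `ω`; in particular the kernel has dimension 0, 1 or 3. -/
theorem stmt19 {V : Type*} [AddCommGroup V] [Module ℂ V] [FiniteDimensional ℂ V]
    (hV : Module.finrank ℂ V = 6)
    (ω : ExteriorAlgebra ℂ V) (hω3 : ω ∈ ⋀[ℂ]^3 V) (hω : ω ≠ 0) :
    (2 ≤ Module.finrank ℂ (wedgeKer ω) →
      ∃ a b c : V, ω = ι ℂ a * ι ℂ b * ι ℂ c) ∧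
    ((∃ a b c : V, ω = ι ℂ a * ι ℂ b * ι ℂ c) ↔
      Module.finrank ℂ (wedgeKer ω) = 3) ∧
    (∀ a b c : V, ω = ι ℂ a * ι ℂ b * ι ℂ c →
      wedgeKer ω = Submodule.span ℂ {a, b, c}) ∧
    (Module.finrank ℂ (wedgeKer ω) = 0 ∨ Module.finrank ℂ (wedgeKer ω) = 1 ∨
      Module.finrank ℂ (wedgeKer ω) = 3) := by
  have key1 : 2 ≤ Module.finrank ℂ (wedgeKer ω) →
      ∃ a b c : V, ω = ι ℂ a * ι ℂ b * ι ℂ c := by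
    intro h2
    let B := Module.finBasis ℂ (wedgeKer ω)
    have hlt0 : 0 < Module.finrank ℂ (wedgeKer ω) := by omega
    have hlt1 : 1 < Module.finrank ℂ (wedgeKer ω) := by omega
    set v₁ : V := ((B ⟨0, hlt0⟩ : wedgeKer ω) : V) with hv₁
    set v₂ : V := ((B ⟨1, hlt1⟩ : wedgeKer ω) : V) with hv₂
    have hinj : Function.Injective ![(⟨0, hlt0⟩ : Fin _), ⟨1, hlt1⟩] := by
      intro i j hij
      fin_cases i <;> fin_cases j <;> simp_all [Fin.ext_iff]
    have hcomp := ((B.linearIndependent.map' (wedgeKer ω).subtype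
      (Submodule.ker_subtype _)).comp _ hinj)
    have hind : LinearIndependent ℂ ![v₁, v₂] := by
      convert hcomp using 1
      funext i
      fin_cases i <;> rfl
      rfl
    exact aux_div ω hω3 v₁ v₂
      ((mem_wedgeKer_iff ω v₁).1 (B ⟨0, hlt0⟩).2)
      ((mem_wedgeKer_iff ω v₂).1 (B ⟨1, hlt1⟩).2) hind
  have key2 : ∀ a b c : V, ω = ι ℂ a * ι ℂ b * ι ℂ c →
      LinearIndependent ℂ ![a, b, c] := by
    intro a b c hd
    by_contra h
    exact hω (hd.trans ((aux_wedge3 a b c).symm.trans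
      ((ιMulti ℂ 3).map_linearDependent _ h)))
  have key3 : ∀ a b c : V, ω = ι ℂ a * ι ℂ b * ι ℂ c →
      wedgeKer ω = Submodule.span ℂ {a, b, c} :=
    fun a b c hd => aux_ker_eq ω a b c hd (key2 a b c hd)
  have key4 : ∀ a b c : V, ω = ι ℂ a * ι ℂ b * ι ℂ c →
      Module.finrank ℂ (wedgeKer ω) = 3 := by
    intro a b c hd
    rw [key3 a b c hd, ← aux_range3 a b c, finrank_span_eq_card (key2 a b c hd)]
    simp
  refine ⟨key1, ⟨fun ⟨a, b, c, hd⟩ => key4 a b c hd, fun h3 => key1 (by omega)⟩,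
    key3, ?_⟩
  by_cases h : 2 ≤ Module.finrank ℂ (wedgeKer ω)
  · obtain ⟨a, b, c, hd⟩ := key1 h
    exact Or.inr (Or.inr (key4 a b c hd))
  · omega
end
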